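/- Let M be a complex n×n matrix with singular values m_1, …, m_n. For each p with 1 ≤ p ≤ n, the p-th elementary symmetric polynomial in the squared singular values equals the sum over all p×p submatrices (choices of p rows with increasing indices and p columns with increasing indices) of the squared absolute values of their determinants: Σ_{i_1<…<i_p} m²_{i_1}⋯m²_{i_p} = Σ_{h_1<…<h_p, k_1<…<k_p} |det M_{[h_1…h_p][k_1…k_p]}|². -/

import Mathlib

open Matrix

attribute [local instance] Classical.propDecidable

open Polynomial in
/-- `m` is the (increasingly ordered) tuple of singular values of `M`. -/
def IsSingularValues {n : ℕ} (M : Matrix (Fin n) (Fin n) ℂ) (m : Fin n → ℝ) : Prop :=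
  (∀ i, 0 ≤ m i) ∧ Monotone m ∧
    (Mᴴ * M).charpoly = ∏ i : Fin n, (X - C ((m i : ℂ) ^ 2))

section Aux

variable {p n : ℕ} {R : Type*} [CommRing R]

private lemma card_image_eq_aux (f : Fin p → Fin n) (hf : Function.Injective f) :
    (Finset.image f Finset.univ).card = p := by
  rw [Finset.card_image_of_injective _ hf, Finset.card_univ, Fintype.card_fin]

/-- decomposition of injective tuples as strictly monotone ∘ permutation -/
private noncomputable def injDecomp {p n : ℕ} :
    ({f : Fin p → Fin n // StrictMono f} × Equiv.Perm (Fin p)) ≃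
      {φ : Fin p → Fin n // Function.Injective φ} where
  toFun x := ⟨x.1.1 ∘ x.2, x.1.2.injective.comp x.2.injective⟩
  invFun φ :=
    ⟨⟨(Finset.image φ.1 Finset.univ).orderEmbOfFin (card_image_eq_aux φ.1 φ.2),
      ((Finset.image φ.1 Finset.univ).orderEmbOfFin (card_image_eq_aux φ.1 φ.2)).strictMono⟩,
      Equiv.ofBijective
        (fun i => ((Finset.image φ.1 Finset.univ).orderIsoOfFin (card_image_eq_aux φ.1 φ.2)).symm
          ⟨φ.1 i, Finset.mem_image_of_mem φ.1 (Finset.mem_univ i)⟩)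
        (Finite.injective_iff_bijective.mp (fun i j hij => by
          apply φ.2
          have := congrArg (fun x => (((Finset.image φ.1 Finset.univ).orderIsoOfFin
            (card_image_eq_aux φ.1 φ.2)) x : Fin n)) hij
          simpa using this))⟩
  left_inv := by
    rintro ⟨⟨f, hf⟩, σ⟩
    have himg : Finset.image (f ∘ σ) Finset.univ = Finset.image f Finset.univ := by
      rw [← Finset.image_image]
      congr 1
      exact Finset.image_univ_equiv σ
    have hinj : Function.Injective (f ∘ σ) := hf.injective.comp σ.injective
    have h1 : f = ⇑((Finset.image (f ∘ σ) Finset.univ).orderEmbOfFin (card_image_eq_aux _ hinj)) :=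
      Finset.orderEmbOfFin_unique _
        (fun x => himg ▸ Finset.mem_image_of_mem f (Finset.mem_univ x)) hf
    refine Prod.ext (Subtype.ext h1.symm) ?_
    refine Equiv.ext fun i => ?_
    have := Finset.coe_orderIsoOfFin_apply (Finset.image (f ∘ σ) Finset.univ)
      (card_image_eq_aux _ hinj) (σ i)
    simp only [Equiv.ofBijective_apply]
    apply_fun ((Finset.image (f ∘ σ) Finset.univ).orderIsoOfFin (card_image_eq_aux _ hinj))
    rw [OrderIso.apply_symm_apply]
    refine Subtype.ext ?_
    rw [this, ← h1]
    rfl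
  right_inv := by
    rintro ⟨φ, hφ⟩
    ext i
    simp only [Function.comp_apply, Equiv.ofBijective_apply]
    rw [← Finset.coe_orderIsoOfFin_apply]
    simp

private lemma det_mul_expand (A : Matrix (Fin p) (Fin n) R) (B : Matrix (Fin n) (Fin p) R) :
    (A * B).det = ∑ φ : Fin p → Fin n, (∏ i, B (φ i) i) * (A.submatrix id φ).det := by
  rw [det_apply']
  simp_rw [mul_apply, Finset.prod_univ_sum, Fintype.piFinset_univ, Finset.mul_sum]
  rw [Finset.sum_comm]
  refine Finset.sum_congr rfl fun φ _ => ?_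
  rw [det_apply', Finset.mul_sum]
  refine Finset.sum_congr rfl fun σ _ => ?_
  rw [Finset.prod_mul_distrib]
  simp only [submatrix_apply, id_eq]
  ring

/-- **Cauchy–Binet formula** -/
private lemma cauchyBinet (A : Matrix (Fin p) (Fin n) R) (B : Matrix (Fin n) (Fin p) R) :
    (A * B).det = ∑ f : {f : Fin p → Fin n // StrictMono f},
      (A.submatrix id f.1).det * (B.submatrix f.1 id).det := by
  rw [det_mul_expand]
  rw [← Finset.sum_filter_of_ne (p := fun φ : Fin p → Fin n => Function.Injective φ)
    (fun φ _ hne => by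
      by_contra hinj
      apply hne
      obtain ⟨i, j, hij, hne'⟩ : ∃ i j, φ i = φ j ∧ i ≠ j := by
        simpa [Function.Injective, not_forall] using hinj
      rw [Matrix.det_zero_of_column_eq hne' (fun k => by simp [hij]), mul_zero])]
  rw [Finset.sum_subtype (p := fun φ : Fin p → Fin n => Function.Injective φ)
    (Finset.filter (fun φ : Fin p → Fin n => Function.Injective φ) Finset.univ) (by simp)
    (fun φ => (∏ i, B (φ i) i) * (A.submatrix id φ).det)]
  rw [← Equiv.sum_comp injDecomp (fun φ : {φ : Fin p → Fin n // Function.Injective φ} =>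
    (∏ i, B (φ.1 i) i) * (A.submatrix id φ.1).det)]
  rw [Fintype.sum_prod_type]
  refine Finset.sum_congr rfl fun f _ => ?_
  have key : ∀ σ : Equiv.Perm (Fin p),
      (A.submatrix id (f.1 ∘ σ)).det = Equiv.Perm.sign σ * (A.submatrix id f.1).det := by
    intro σ
    rw [show A.submatrix id (f.1 ∘ σ) = (A.submatrix id f.1).submatrix id σ from rfl]
    exact Matrix.det_permute' σ _
  simp only [injDecomp, Equiv.coe_fn_mk]
  simp_rw [key]
  rw [det_apply' (B.submatrix f.1 id), Finset.mul_sum]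
  refine Finset.sum_congr rfl fun σ _ => ?_
  simp only [submatrix_apply, id_eq, Function.comp_apply]
  ring

/-- the `p`-th compound matrix -/
private noncomputable def cpd (p : ℕ) (X : Matrix (Fin n) (Fin n) R) :
    Matrix {f : Fin p → Fin n // StrictMono f} {f : Fin p → Fin n // StrictMono f} R :=
  fun r c => (X.submatrix r.1 c.1).det

private lemma cpd_mul (X Y : Matrix (Fin n) (Fin n) R) :
    cpd p (X * Y) = cpd p X * cpd p Y := by
  ext r c
  rw [mul_apply]
  have h : (X * Y).submatrix r.1 c.1 = (X.submatrix r.1 id) * (Y.submatrix id c.1) := by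
    ext i j
    simp [mul_apply]
  rw [cpd, h, cauchyBinet]
  rfl

private lemma strictMono_eq_of_image_eq {f g : Fin p → Fin n} (hf : StrictMono f)
    (hg : StrictMono g) (h : Finset.image f Finset.univ = Finset.image g Finset.univ) :
    f = g :=
  (Finset.orderEmbOfFin_unique (card_image_eq_aux f hf.injective)
      (fun x => Finset.mem_image_of_mem f (Finset.mem_univ x)) hf).trans
    (Finset.orderEmbOfFin_unique (card_image_eq_aux f hf.injective)
      (fun x => by rw [h]; exact Finset.mem_image_of_mem g (Finset.mem_univ x)) hg).symm

private lemma cpd_one : cpd p (1 : Matrix (Fin n) (Fin n) R) = 1 := by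
  ext r c
  by_cases h : r = c
  · subst h
    have h1 : (1 : Matrix (Fin n) (Fin n) R).submatrix r.1 r.1 = 1 := by
      ext i j
      by_cases hij : i = j
      · subst hij; simp
      · simp [one_apply, hij, r.2.injective.ne hij]
    rw [cpd, h1, det_one, one_apply_eq]
  · rw [one_apply_ne h]
    have hne : Finset.image r.1 Finset.univ ≠ Finset.image c.1 Finset.univ := by
      intro heq
      exact h (Subtype.ext (strictMono_eq_of_image_eq r.2 c.2 heq))
    have hns : ¬ (Finset.image r.1 Finset.univ ⊆ Finset.image c.1 Finset.univ) := by
      intro hsub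
      exact hne (Finset.eq_of_subset_of_card_le hsub
        (by rw [card_image_eq_aux _ r.2.injective, card_image_eq_aux _ c.2.injective]))
    obtain ⟨x, hx, hx'⟩ := Finset.not_subset.mp hns
    obtain ⟨i, _, rfl⟩ := Finset.mem_image.mp hx
    refine Matrix.det_eq_zero_of_row_eq_zero i fun j => ?_
    simp only [submatrix_apply]
    rw [one_apply_ne]
    intro heq
    exact hx' (heq ▸ Finset.mem_image_of_mem c.1 (Finset.mem_univ j))

private lemma image_orderEmbOfFin (s : Finset (Fin n)) (h : s.card = p) :
    Finset.image (⇑(s.orderEmbOfFin h)) Finset.univ = s := by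
  rw [← Finset.coe_inj, Finset.coe_image, Finset.coe_univ, Set.image_univ,
    Finset.range_orderEmbOfFin]

private lemma sum_strictMono_prod (g : Fin n → R) :
    ∑ r : {f : Fin p → Fin n // StrictMono f}, ∏ i, g (r.1 i) =
      ∑ s ∈ Finset.powersetCard p (Finset.univ : Finset (Fin n)), ∏ i ∈ s, g i := by
  refine Finset.sum_bij' (fun r _ => Finset.image r.1 Finset.univ)
    (fun s hs => ⟨s.orderEmbOfFin (Finset.mem_powersetCard_univ.mp hs),
      (s.orderEmbOfFin (Finset.mem_powersetCard_univ.mp hs)).strictMono⟩) ?_ ?_ ?_ ?_ ?_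
  · intro r _
    exact Finset.mem_powersetCard_univ.mpr (card_image_eq_aux _ r.2.injective)
  · intro s _
    exact Finset.mem_univ _
  · intro r _
    exact Subtype.ext (Finset.orderEmbOfFin_unique _
      (fun x => Finset.mem_image_of_mem r.1 (Finset.mem_univ x)) r.2).symm
  · intro s hs
    exact image_orderEmbOfFin s (Finset.mem_powersetCard_univ.mp hs)
  · intro r _
    exact (Finset.prod_image (fun i _ j _ h => r.2.injective h)).symm

end Aux

open Polynomial in
private lemma charpoly_diagonal {n : ℕ} {R : Type*} [CommRing R] (d : Fin n → R) :
    (Matrix.diagonal d).charpoly = ∏ i, (X - C (d i)) := by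
  rw [Matrix.charpoly]
  have : charmatrix (Matrix.diagonal d) = Matrix.diagonal fun i => X - C (d i) := by
    ext i j
    by_cases h : i = j
    · subst h; simp [charmatrix_apply_eq]
    · simp [charmatrix_apply_ne _ _ _ h, Matrix.diagonal_apply_ne _ h]
  rw [this, Matrix.det_diagonal]


open Polynomial in
private lemma charpoly_unitary_conj {n : ℕ} (U D : Matrix (Fin n) (Fin n) ℂ)
    (hU : U * star U = 1) (hU' : star U * U = 1) :
    (U * D * star U).charpoly = D.charpoly := by
  have key : charmatrix (U * D * star U) =
      (C : ℂ →+* ℂ[X]).mapMatrix U * charmatrix D * (C : ℂ →+* ℂ[X]).mapMatrix (star U) := by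
    unfold charmatrix
    rw [Matrix.mul_sub, Matrix.sub_mul]
    congr 1
    · rw [((Matrix.scalar_commute (X : ℂ[X]) (fun r' => Commute.all _ _)
        ((C : ℂ →+* ℂ[X]).mapMatrix U)).symm :
          (C : ℂ →+* ℂ[X]).mapMatrix U * Matrix.scalar (Fin n) X = _)]
      rw [mul_assoc, ← _root_.map_mul, hU, _root_.map_one, mul_one]
    · rw [← _root_.map_mul, ← _root_.map_mul]
  have h1 : (C : ℂ →+* ℂ[X]).mapMatrix (star U) * (C : ℂ →+* ℂ[X]).mapMatrix U = 1 := by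
    rw [← _root_.map_mul, hU', _root_.map_one]
  rw [Matrix.charpoly, Matrix.charpoly, key, det_mul, det_mul, mul_comm, ← mul_assoc,
    ← det_mul, h1, det_one, one_mul]

open Polynomial in
/-- The `p`-th elementary symmetric polynomial of the squared singular values equals the
sum of the squared absolute values of the determinants of all `p × p` submatrices. -/
theorem esymm_sq_singular_values_eq_sum_sq_subdets {n p : ℕ} (hp : 1 ≤ p) (hpn : p ≤ n)
    (M : Matrix (Fin n) (Fin n) ℂ) (m : Fin n → ℝ) (hm : IsSingularValues M m) :
    ∑ s ∈ Finset.powersetCard p (Finset.univ : Finset (Fin n)), ∏ i ∈ s, (m i) ^ 2 =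
      ∑ r : {f : Fin p → Fin n // StrictMono f}, ∑ c : {g : Fin p → Fin n // StrictMono g},
        ‖(M.submatrix r.1 c.1).det‖ ^ 2 := by
  have hA : (Mᴴ * M).IsHermitian := isHermitian_conjTranspose_mul_self M
  set μ := hA.eigenvalues with hμ
  set U : Matrix (Fin n) (Fin n) ℂ :=
    (Matrix.IsHermitian.eigenvectorUnitary hA : Matrix (Fin n) (Fin n) ℂ) with hUdef
  set D : Matrix (Fin n) (Fin n) ℂ := Matrix.diagonal (fun i => (μ i : ℂ)) with hDdef
  have hUU : U * star U = 1 :=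
    Matrix.mem_unitaryGroup_iff.mp (Matrix.IsHermitian.eigenvectorUnitary hA).2
  have hUU' : star U * U = 1 :=
    Matrix.mem_unitaryGroup_iff'.mp (Matrix.IsHermitian.eigenvectorUnitary hA).2
  have hspec : Mᴴ * M = U * D * star U := hA.spectral_theorem
  have hcharA : (Mᴴ * M).charpoly = ∏ i, (X - C ((μ i : ℂ))) := by
    rw [hspec, charpoly_unitary_conj U D hUU hUU', hDdef, _root_.charpoly_diagonal]
  have hms : (Finset.univ.val.map fun i : Fin n => ((m i : ℂ)) ^ 2) =
      Finset.univ.val.map (fun i : Fin n => ((μ i : ℂ))) := by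
    have h1 : ((Finset.univ.val.map fun i : Fin n => ((m i : ℂ)) ^ 2).map
          fun a => X - C a).prod =
        ((Finset.univ.val.map fun i : Fin n => ((μ i : ℂ))).map fun a => X - C a).prod := by
      rw [Multiset.map_map, Multiset.map_map]
      rw [← Finset.prod_eq_multiset_prod, ← Finset.prod_eq_multiset_prod]
      exact (hm.2.2.symm.trans hcharA :)
    have h2 := congrArg Polynomial.roots h1
    rwa [Polynomial.roots_multiset_prod_X_sub_C, Polynomial.roots_multiset_prod_X_sub_C] at h2
  have hesymm : ∑ s ∈ Finset.powersetCard p (Finset.univ : Finset (Fin n)),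
        ∏ i ∈ s, ((m i : ℂ)) ^ 2 =
      ∑ s ∈ Finset.powersetCard p (Finset.univ : Finset (Fin n)), ∏ i ∈ s, ((μ i : ℂ)) := by
    have h3 := congrArg (fun t : Multiset ℂ => t.esymm p) hms
    simpa only [Finset.esymm_map_val] using h3
  have hTD : ∑ r : {f : Fin p → Fin n // StrictMono f}, ∏ i, ((μ (r.1 i)) : ℂ) =
      Matrix.trace (cpd p D) := by
    rw [Matrix.trace]
    refine Finset.sum_congr rfl fun r _ => ?_
    have hsub : D.submatrix r.1 r.1 = Matrix.diagonal (fun i => (μ (r.1 i) : ℂ)) := by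
      ext i j
      by_cases hij : i = j
      · subst hij; simp [hDdef]
      · simp [hDdef, Matrix.diagonal_apply_ne, hij, r.2.injective.ne hij]
    simp only [Matrix.diag, cpd, hsub, det_diagonal]
  have hTA : Matrix.trace (cpd p (Mᴴ * M)) = Matrix.trace (cpd p D) := by
    rw [hspec, cpd_mul, cpd_mul, Matrix.trace_mul_cycle, ← cpd_mul, hUU', cpd_one, one_mul]
  have hMM : Matrix.trace (cpd p (Mᴴ * M)) =
      ∑ r : {f : Fin p → Fin n // StrictMono f}, ∑ c : {g : Fin p → Fin n // StrictMono g},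
        ((‖(M.submatrix c.1 r.1).det‖ : ℝ) ^ 2 : ℂ) := by
    rw [cpd_mul, Matrix.trace]
    refine Finset.sum_congr rfl fun r _ => ?_
    rw [Matrix.diag]
    rw [Matrix.mul_apply]
    refine Finset.sum_congr rfl fun c _ => ?_
    simp only [cpd]
    have hct : (Mᴴ).submatrix r.1 c.1 = (M.submatrix c.1 r.1)ᴴ := by
      ext i j; simp
    rw [hct, det_conjTranspose]
    rw [show ((‖(M.submatrix c.1 r.1).det‖ : ℝ) ^ 2 : ℂ) =
      ((Complex.normSq (M.submatrix c.1 r.1).det : ℝ) : ℂ) by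
        rw [← Complex.sq_norm]; push_cast; ring]
    rw [Complex.normSq_eq_conj_mul_self]
    rfl
  have hmain : ((∑ s ∈ Finset.powersetCard p (Finset.univ : Finset (Fin n)),
        ∏ i ∈ s, (m i) ^ 2 : ℝ) : ℂ) =
      ∑ r : {f : Fin p → Fin n // StrictMono f}, ∑ c : {g : Fin p → Fin n // StrictMono g},
        ((‖(M.submatrix r.1 c.1).det‖ : ℝ) ^ 2 : ℂ) := by
    push_cast
    calc ∑ s ∈ Finset.powersetCard p (Finset.univ : Finset (Fin n)), ∏ i ∈ s, ((m i : ℂ)) ^ 2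
        = ∑ s ∈ Finset.powersetCard p (Finset.univ : Finset (Fin n)), ∏ i ∈ s, ((μ i : ℂ)) :=
          hesymm
      _ = ∑ r : {f : Fin p → Fin n // StrictMono f}, ∏ i, ((μ (r.1 i)) : ℂ) :=
          (sum_strictMono_prod (fun i => (μ i : ℂ))).symm
      _ = Matrix.trace (cpd p D) := hTD
      _ = Matrix.trace (cpd p (Mᴴ * M)) := hTA.symm
      _ = ∑ r : {f : Fin p → Fin n // StrictMono f}, ∑ c : {g : Fin p → Fin n // StrictMono g},
            ((‖(M.submatrix c.1 r.1).det‖ : ℝ) ^ 2 : ℂ) := hMM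
      _ = ∑ r : {f : Fin p → Fin n // StrictMono f}, ∑ c : {g : Fin p → Fin n // StrictMono g},
            ((‖(M.submatrix r.1 c.1).det‖ : ℝ) ^ 2 : ℂ) := Finset.sum_comm
  exact_mod_cast hmain
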